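/- For all real z with |z| < 1, the identity π·z / (2·√(1−z²)) = Σ_{m=0}^∞ (2z)^{2m+1} / (binom(2m+1, m+1/2) · (2m+1)) holds, where binom(2m+1, m+1/2) := Γ(2m+2)/Γ(m+3/2)². -/

import Mathlib

open Real

/-- The half-integer binomial coefficient `binom(2m+1, m+1/2) = Γ(2m+2)/Γ(m+3/2)²`. -/
noncomputable def halfBinom (m : ℕ) : ℝ :=
  Real.Gamma (2 * m + 2) / (Real.Gamma ((m : ℝ) + 3 / 2)) ^ 2

/-- `cc m = C(2m,m)/4^m`, the normalized central binomial coefficient. -/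
noncomputable def cc (m : ℕ) : ℝ := (Nat.centralBinom m : ℝ) / 4 ^ m

lemma cc_pos (m : ℕ) : 0 < cc m :=
  div_pos (by exact_mod_cast Nat.centralBinom_pos m) (by positivity)

lemma cc_rec (m : ℕ) : (2 * (m : ℝ) + 2) * cc (m + 1) = (2 * m + 1) * cc m := by
  have h := Nat.succ_mul_centralBinom_succ m
  have h' : ((m : ℝ) + 1) * (Nat.centralBinom (m + 1) : ℝ)
      = 2 * (2 * m + 1) * (Nat.centralBinom m : ℝ) := by exact_mod_cast h
  unfold cc
  rw [pow_succ]
  have h4 : (4 : ℝ) ^ m ≠ 0 := by positivity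
  field_simp
  linear_combination 2 * h'

lemma cc_le_one (m : ℕ) : cc m ≤ 1 := by
  induction m with
  | zero => simp [cc, Nat.centralBinom]
  | succ n ih =>
      have h := cc_rec n
      have hp := cc_pos n
      have hn : (0 : ℝ) ≤ (n : ℝ) := Nat.cast_nonneg n
      nlinarith [cc_pos (n + 1)]

lemma hasSum_cc (x : ℝ) (hx : |x| < 1) :
    HasSum (fun m : ℕ => cc m * x ^ m) (1 / Real.sqrt (1 - x)) := by
  have habs := abs_lt.mp hx
  set r : ℝ := (1 + |x|) / 2 with hrdef
  have hr0 : (0 : ℝ) < r := by have := abs_nonneg x; simp only [hrdef]; linarith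
  have hr1 : r < 1 := by simp only [hrdef]; linarith
  have hxr : |x| < r := by simp only [hrdef]; linarith
  set s : Set ℝ := Metric.ball (0 : ℝ) r with hsdef
  have hs_open : IsOpen s := Metric.isOpen_ball
  have hs_conv : Convex ℝ s := convex_ball 0 r
  have hmem : ∀ y ∈ s, |y| < r := by
    intro y hy
    simpa [hsdef, Real.dist_eq] using hy
  have hmem' : ∀ y : ℝ, |y| < r → y ∈ s := by
    intro y hy
    simpa [hsdef, Real.dist_eq] using hy
  have hxs : x ∈ s := hmem' x hxr
  have h0s : (0 : ℝ) ∈ s := hmem' 0 (by simpa using hr0)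
  -- summability on s
  have hsum : ∀ y : ℝ, |y| ≤ r → Summable (fun m : ℕ => cc m * y ^ m) := by
    intro y hy
    apply Summable.of_norm_bounded (g := fun m => r ^ m)
      (summable_geometric_of_lt_one hr0.le hr1)
    intro m
    rw [norm_mul, norm_pow, Real.norm_eq_abs, Real.norm_eq_abs,
      abs_of_pos (cc_pos m)]
    calc cc m * |y| ^ m ≤ 1 * r ^ m := by
          apply mul_le_mul (cc_le_one m) (pow_le_pow_left₀ (abs_nonneg y) hy m)
            (by positivity) one_pos.le
      _ = r ^ m := one_mul _
  -- summable bound for derivatives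
  have hu : Summable (fun m : ℕ => (m : ℝ) * r ^ (m - 1)) := by
    have h1 : Summable (fun n : ℕ => ((n : ℝ) + 1) * r ^ n) := by
      have h2 := summable_pow_mul_geometric_of_norm_lt_one (R := ℝ) 1
        (r := r) (by rwa [Real.norm_eq_abs, abs_of_pos hr0])
      simpa [pow_one, add_mul, one_mul] using
        h2.add (summable_geometric_of_lt_one hr0.le hr1)
    apply (summable_nat_add_iff 1).mp
    simpa using h1
  -- derivative bound
  have hbound : ∀ (m : ℕ) (t : ℝ), t ∈ s →
      ‖cc m * ((m : ℝ) * t ^ (m - 1))‖ ≤ (m : ℝ) * r ^ (m - 1) := by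
    intro m t ht
    have htr := hmem t ht
    rw [norm_mul, norm_mul, norm_pow, Real.norm_eq_abs, Real.norm_eq_abs,
      Real.norm_eq_abs, abs_of_pos (cc_pos m), Nat.abs_cast]
    calc cc m * ((m : ℝ) * |t| ^ (m - 1)) ≤ 1 * ((m : ℝ) * r ^ (m - 1)) := by
          apply mul_le_mul (cc_le_one m)
          · apply mul_le_mul le_rfl (pow_le_pow_left₀ (abs_nonneg t) htr.le _)
              (by positivity) (Nat.cast_nonneg m)
          · positivity
          · norm_num
      _ = (m : ℝ) * r ^ (m - 1) := one_mul _
  -- the sum function and its derivative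
  set S : ℝ → ℝ := fun t => ∑' m : ℕ, cc m * t ^ m with hSdef
  set Df : ℝ → ℝ := fun t => ∑' m : ℕ, cc m * ((m : ℝ) * t ^ (m - 1)) with hDdef
  have hderiv : ∀ y ∈ s, HasDerivAt S (Df y) y := by
    intro y hy
    exact hasDerivAt_tsum_of_isPreconnected hu hs_open hs_conv.isPreconnected
      (fun m t _ => (hasDerivAt_pow m t).const_mul (cc m))
      hbound h0s (hsum 0 (by simpa using hr0.le)) hy
  -- the key ODE: 2 (1 - y) S' = S on s
  have key : ∀ y ∈ s, 2 * (1 - y) * Df y = S y := by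
    intro y hy
    have hyr := hmem y hy
    have hA : Summable (fun m : ℕ => cc m * ((m : ℝ) * y ^ (m - 1))) :=
      Summable.of_norm_bounded hu (fun m => hbound m y hy)
    have hAs : HasSum (fun m : ℕ => cc m * ((m : ℝ) * y ^ (m - 1))) (Df y) := hA.hasSum
    have h2 : HasSum (fun m : ℕ => 2 * (cc m * ((m : ℝ) * y ^ (m - 1)))) (2 * Df y) :=
      hAs.mul_left 2
    have h3 := (hasSum_nat_add_iff'
      (f := fun m : ℕ => 2 * (cc m * ((m : ℝ) * y ^ (m - 1)))) 1).mpr h2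
    have h3' : HasSum (fun n : ℕ =>
        2 * (cc (n + 1) * (((n : ℝ) + 1) * y ^ n))) (2 * Df y) := by
      have he : ∀ n : ℕ, 2 * (cc (n + 1) * (((n + 1 : ℕ) : ℝ) * y ^ (n + 1 - 1)))
          = 2 * (cc (n + 1) * (((n : ℝ) + 1) * y ^ n)) := by
        intro n; push_cast; ring_nf
      simpa [he] using h3
    have hC : HasSum (fun m : ℕ => 2 * y * (cc m * ((m : ℝ) * y ^ (m - 1))))
        (2 * y * Df y) := hAs.mul_left (2 * y)
    have hT : HasSum (fun m : ℕ => cc m * y ^ m) (2 * Df y - 2 * y * Df y) := by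
      have hsub := h3'.sub hC
      have he : (fun m : ℕ => 2 * (cc (m + 1) * (((m : ℝ) + 1) * y ^ m))
          - 2 * y * (cc m * ((m : ℝ) * y ^ (m - 1))))
          = fun m : ℕ => cc m * y ^ m := by
        funext m
        rcases m with _ | n
        · simp only [Nat.cast_zero, pow_zero, Nat.zero_sub, zero_mul, mul_zero, sub_zero]
          push_cast
          linear_combination cc_rec 0
        · simp only [Nat.add_sub_cancel]
          have hrec := cc_rec (n + 1)
          push_cast at hrec ⊢
          linear_combination (y ^ (n + 1)) * hrec
      rw [he] at hsub
      exact hsub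
    have hS : HasSum (fun m : ℕ => cc m * y ^ m) (S y) := (hsum y hyr.le).hasSum
    have := hS.unique hT
    linarith [this]
  -- h(y) = S(y)^2 (1-y) has derivative 0 on s
  have hd : ∀ t ∈ s, HasDerivAt (fun w => (S w) ^ 2 * (1 - w)) 0 t := by
    intro t ht
    have h1 : HasDerivAt S (Df t) t := hderiv t ht
    have h2 : HasDerivAt (fun w => (1 : ℝ) - w) (-1) t := by
      exact HasDerivAt.const_sub 1 (hasDerivAt_id' t)
    have h3 := (h1.pow 2).mul h2
    have hkey := key t ht
    have hval : ((2 : ℕ) : ℝ) * S t ^ (2 - 1) * Df t * (1 - t) + S t ^ 2 * -1 = 0 := by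
      push_cast
      linear_combination (S t) * hkey
    rw [Pi.pow_apply, hval] at h3
    exact h3
  -- constancy of h on s
  have hconst : ∀ y ∈ s, (S y) ^ 2 * (1 - y) = (S 0) ^ 2 * (1 - 0) := by
    intro y hy
    have h := hs_conv.norm_image_sub_le_of_norm_hasDerivWithin_le (C := 0)
      (f := fun w => (S w) ^ 2 * (1 - w)) (f' := fun _ => 0)
      (fun t ht => (hd t ht).hasDerivWithinAt) (fun t _ => by simp) h0s hy
    rw [zero_mul, Real.norm_eq_abs] at h
    have h2 := abs_nonpos_iff.mp h
    have h3 := sub_eq_zero.mp h2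
    simpa using h3
  have hS0 : S 0 = 1 := by
    have h1 : S 0 = ∑' m : ℕ, cc m * (0 : ℝ) ^ m := rfl
    rw [h1, tsum_eq_single 0 (by intro m hm; simp [zero_pow hm])]
    simp [cc, Nat.centralBinom]
  have eq1 : ∀ y ∈ s, (S y) ^ 2 * (1 - y) = 1 := by
    intro y hy
    rw [hconst y hy, hS0]; norm_num
  -- positivity of S x
  have hx1 : (0 : ℝ) < 1 - x := by linarith [habs.2]
  have hsqx : (S x) ^ 2 * (1 - x) = 1 := eq1 x hxs
  have hSxpos : 0 < S x := by
    by_contra hneg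
    push_neg at hneg
    have hne : S x ≠ 0 := by
      intro h0; rw [h0] at hsqx; norm_num at hsqx
    have hlt : S x < 0 := lt_of_le_of_ne hneg hne
    have hsub : Set.uIcc 0 x ⊆ s := hs_conv.ordConnected.uIcc_subset h0s hxs
    have hcont : ContinuousOn S (Set.uIcc 0 x) := fun t ht =>
      ((hderiv t (hsub ht)).continuousAt).continuousWithinAt
    have h0mem : (0 : ℝ) ∈ Set.uIcc (S 0) (S x) :=
      Set.mem_uIcc.mpr (Or.inr ⟨hlt.le, by rw [hS0]; norm_num⟩)
    obtain ⟨c, hc, hc0⟩ := intermediate_value_uIcc hcont h0mem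
    have := eq1 c (hsub hc)
    rw [hc0] at this
    simp at this
  -- conclude S x = 1/√(1-x)
  have hfin : S x = 1 / Real.sqrt (1 - x) := by
    have h1 : Real.sqrt ((S x) ^ 2) = S x := Real.sqrt_sq hSxpos.le
    have h2 : (S x) ^ 2 = 1 / (1 - x) := by
      field_simp at hsqx ⊢; linarith
    rw [← h1, h2, one_div, Real.sqrt_inv, one_div]
  have := (hsum x hxr.le).hasSum
  rwa [← hfin]

lemma Gamma_halfint (m : ℕ) :
    Real.Gamma ((m : ℝ) + 3 / 2)
      = Real.sqrt π * (Nat.factorial (2 * m + 1)) / (4 ^ m * Nat.factorial m * 2) := by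
  induction m with
  | zero =>
      have h : ((0 : ℕ) : ℝ) + 3 / 2 = 1 / 2 + 1 := by norm_num
      rw [h, Real.Gamma_add_one (by norm_num), Real.Gamma_one_half_eq]
      simp [Nat.factorial]
      ring
  | succ n ih =>
      have h : ((n + 1 : ℕ) : ℝ) + 3 / 2 = ((n : ℝ) + 3 / 2) + 1 := by push_cast; ring
      rw [h, Real.Gamma_add_one (by positivity), ih]
      have hf1 : (Nat.factorial (2 * (n + 1) + 1) : ℝ)
          = (2 * n + 3) * ((2 * n + 2) * (Nat.factorial (2 * n + 1) : ℝ)) := by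
        have : 2 * (n + 1) + 1 = (2 * n + 2) + 1 := by ring
        rw [this, Nat.factorial_succ, Nat.factorial_succ]
        push_cast; ring
      have hf2 : (Nat.factorial (n + 1) : ℝ) = ((n : ℝ) + 1) * Nat.factorial n := by
        rw [Nat.factorial_succ]; push_cast; ring
      rw [hf1, hf2]
      have hfn : (Nat.factorial n : ℝ) ≠ 0 := by
        exact_mod_cast Nat.factorial_ne_zero n
      have h4 : (4 : ℝ) ^ n ≠ 0 := by positivity
      field_simp
      ring

lemma term_eq (z : ℝ) (m : ℕ) :
    (2 * z) ^ (2 * m + 1) / (halfBinom m * (2 * m + 1))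
      = π / 2 * z * (cc m * (z ^ 2) ^ m) := by
  have hg1 : Real.Gamma (2 * (m : ℝ) + 2) = (Nat.factorial (2 * m + 1) : ℝ) := by
    have h : 2 * (m : ℝ) + 2 = ((2 * m + 1 : ℕ) : ℝ) + 1 := by push_cast; ring
    rw [h, Real.Gamma_nat_eq_factorial]
  have hg2 := Gamma_halfint m
  have hcb : (Nat.centralBinom m : ℝ)
      = (Nat.factorial (2 * m) : ℝ) / ((Nat.factorial m : ℝ) * (Nat.factorial m : ℝ)) := by
    rw [Nat.centralBinom]
    rw [Nat.cast_choose (K := ℝ) (show m ≤ 2 * m by omega)]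
    have h : 2 * m - m = m := by omega
    rw [h]
  have hf : (Nat.factorial (2 * m + 1) : ℝ) = (2 * m + 1) * Nat.factorial (2 * m) := by
    rw [Nat.factorial_succ]; push_cast; ring
  have hfm : (Nat.factorial m : ℝ) ≠ 0 := by exact_mod_cast Nat.factorial_ne_zero m
  have hf2m : (Nat.factorial (2 * m) : ℝ) ≠ 0 := by exact_mod_cast Nat.factorial_ne_zero (2 * m)
  have hpi : (0 : ℝ) < π := Real.pi_pos
  have hsq : Real.sqrt π ^ 2 = π := Real.sq_sqrt hpi.le
  have h4 : (4 : ℝ) ^ m ≠ 0 := by positivity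
  have h2m1 : (2 * (m : ℝ) + 1) ≠ 0 := by positivity
  unfold halfBinom cc
  rw [hg1, hg2, hcb, hf]
  rw [div_pow]
  have hzz : (2 * z) ^ (2 * m + 1) = 2 * z * (4 ^ m * (z ^ 2) ^ m) := by
    rw [pow_succ, pow_mul, mul_pow]
    ring_nf
  rw [hzz]
  field_simp
  ring_nf
  rw [hsq]

theorem half_integer_central_binomial_series (z : ℝ) (hz : |z| < 1) :
    Real.pi * z / (2 * Real.sqrt (1 - z ^ 2)) =
      ∑' m : ℕ, (2 * z) ^ (2 * m + 1) / (halfBinom m * (2 * m + 1)) := by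
  have hx : |z ^ 2| < 1 := by
    rw [abs_pow]
    nlinarith [abs_nonneg z]
  have h := hasSum_cc (z ^ 2) hx
  have h2 := h.mul_left (π / 2 * z)
  have heq : (fun m : ℕ => (2 * z) ^ (2 * m + 1) / (halfBinom m * (2 * m + 1)))
      = fun m : ℕ => π / 2 * z * (cc m * (z ^ 2) ^ m) := funext (term_eq z)
  rw [← heq] at h2
  rw [h2.tsum_eq]
  ring
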